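/- Let B be a q×q symmetric matrix with strictly positive entries, let c ∈ ℝ^q have strictly positive entries, and let v*_∅ be the unique minimizer (with strictly positive entries) of the infimum defining λ_∅. Then λ = λ_∅ if and only if λ_max(diag(c)^{1/2} B diag(c)^{1/2} − diag(v*_∅)^{-1}) ≤ 0. -/

import Mathlib

open MeasureTheory ProbabilityTheory Matrix

noncomputable section

/-- squared ℓ² norm of a real vector -/
def nsqR {q : ℕ} (v : Fin q → ℝ) : ℝ := ∑ i, v i ^ 2

/-- Rayleigh quotient ⟨v, M v⟩ of a real matrix at a vector -/
def rayR {q : ℕ} (M : Matrix (Fin q) (Fin q) ℝ) (v : Fin q → ℝ) : ℝ := v ⬝ᵥ M.mulVec v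

/-- largest eigenvalue of a real symmetric matrix, characterized as the supremum of the
Rayleigh quotient over ℓ²-unit vectors -/
def lmaxR {q : ℕ} (M : Matrix (Fin q) (Fin q) ℝ) : ℝ :=
  sSup {x | ∃ v, nsqR v = 1 ∧ x = rayR M v}

/-- the quantity λ = inf_{v > 0} max{λ_max(diag(c)^{1/2} B diag(c)^{1/2} +
diag(B diag(c)(v - 1))), λ_max(diag(v)⁻¹ + diag(B diag(c)(v - 1)))} -/
def lamVal {q : ℕ} (B : Matrix (Fin q) (Fin q) ℝ) (c : Fin q → ℝ) : ℝ :=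
  sInf {x | ∃ v : Fin q → ℝ, (∀ k, 0 < v k) ∧
    x = max
      (lmaxR (Matrix.diagonal (fun k => Real.sqrt (c k)) * B *
          Matrix.diagonal (fun k => Real.sqrt (c k)) +
        Matrix.diagonal ((B * Matrix.diagonal c).mulVec (v - 1))))
      (lmaxR (Matrix.diagonal (fun k => (v k)⁻¹) +
        Matrix.diagonal ((B * Matrix.diagonal c).mulVec (v - 1))))}

/-- the quantity λ_∅ = inf_{v > 0} λ_max(diag(v)⁻¹ + diag(B diag(c)(v - 1))) -/
def lamNull {q : ℕ} (B : Matrix (Fin q) (Fin q) ℝ) (c : Fin q → ℝ) : ℝ :=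
  sInf {x | ∃ v : Fin q → ℝ, (∀ k, 0 < v k) ∧
    x = lmaxR (Matrix.diagonal (fun k => (v k)⁻¹) +
      Matrix.diagonal ((B * Matrix.diagonal c).mulVec (v - 1)))}

/-! ### Auxiliary lemmas on `rayR` and `lmaxR` -/

lemma rayR_add {q : ℕ} (M N : Matrix (Fin q) (Fin q) ℝ) (v : Fin q → ℝ) :
    rayR (M + N) v = rayR M v + rayR N v := by
  simp [rayR, Matrix.add_mulVec, dotProduct_add]

lemma rayR_sub {q : ℕ} (M N : Matrix (Fin q) (Fin q) ℝ) (v : Fin q → ℝ) :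
    rayR (M - N) v = rayR M v - rayR N v := by
  simp [rayR, Matrix.sub_mulVec, dotProduct_sub]

lemma rayR_diagonal {q : ℕ} (δ : Fin q → ℝ) (v : Fin q → ℝ) :
    rayR (Matrix.diagonal δ) v = ∑ k, δ k * v k ^ 2 := by
  simp only [rayR, dotProduct, Matrix.mulVec_diagonal]
  congr 1; ext k; ring

lemma nsqR_single {q : ℕ} (k : Fin q) : nsqR (Pi.single k (1:ℝ)) = 1 := by
  simp only [nsqR, Pi.single_apply]
  rw [Finset.sum_eq_single k]
  · simp
  · intro j _ hj; simp [hj]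
  · simp

lemma abs_le_one_of_nsq {q : ℕ} {v : Fin q → ℝ} (h : nsqR v = 1) (i : Fin q) :
    |v i| ≤ 1 := by
  have h1 : v i ^ 2 ≤ 1 := by
    rw [← h]
    exact Finset.single_le_sum (f := fun j => v j ^ 2) (fun j _ => sq_nonneg _) (Finset.mem_univ i)
  nlinarith [abs_nonneg (v i), sq_abs (v i)]

lemma rayR_le_bound {q : ℕ} (M : Matrix (Fin q) (Fin q) ℝ) {v : Fin q → ℝ}
    (h : nsqR v = 1) : rayR M v ≤ ∑ i, ∑ j, |M i j| := by
  have : rayR M v = ∑ i, ∑ j, v i * (M i j * v j) := by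
    simp [rayR, dotProduct, Matrix.mulVec, Finset.mul_sum]
  rw [this]
  refine Finset.sum_le_sum fun i _ => Finset.sum_le_sum fun j _ => ?_
  calc v i * (M i j * v j) ≤ |v i * (M i j * v j)| := le_abs_self _
    _ = |v i| * |M i j| * |v j| := by rw [abs_mul, abs_mul]; ring
    _ ≤ 1 * |M i j| * 1 := by
        have h1 := abs_le_one_of_nsq h i
        have h2 := abs_le_one_of_nsq h j
        have hM := abs_nonneg (M i j)
        have s1 : |v i| * |M i j| ≤ 1 * |M i j| :=
          mul_le_mul_of_nonneg_right h1 hM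
        have s2 : |v i| * |M i j| * |v j| ≤ |v i| * |M i j| * 1 :=
          mul_le_mul_of_nonneg_left h2 (mul_nonneg (abs_nonneg _) hM)
        calc |v i| * |M i j| * |v j| ≤ |v i| * |M i j| * 1 := s2
          _ = |v i| * |M i j| := by ring
          _ ≤ 1 * |M i j| := s1
          _ = 1 * |M i j| * 1 := by ring
    _ = |M i j| := by ring

lemma lmax_bddAbove {q : ℕ} (M : Matrix (Fin q) (Fin q) ℝ) :
    BddAbove {x | ∃ v, nsqR v = 1 ∧ x = rayR M v} := by
  refine ⟨∑ i, ∑ j, |M i j|, fun x hx => ?_⟩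
  obtain ⟨v, hv, rfl⟩ := hx
  exact rayR_le_bound M hv

lemma lmax_nonempty {q : ℕ} (hq : 0 < q) (M : Matrix (Fin q) (Fin q) ℝ) :
    Set.Nonempty {x | ∃ v, nsqR v = 1 ∧ x = rayR M v} :=
  ⟨_, Pi.single ⟨0, hq⟩ 1, nsqR_single _, rfl⟩

lemma rayR_le_lmaxR {q : ℕ} (M : Matrix (Fin q) (Fin q) ℝ) {v : Fin q → ℝ}
    (h : nsqR v = 1) : rayR M v ≤ lmaxR M :=
  le_csSup (lmax_bddAbove M) ⟨v, h, rfl⟩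

lemma lmaxR_le {q : ℕ} (hq : 0 < q) (M : Matrix (Fin q) (Fin q) ℝ) {b : ℝ}
    (h : ∀ v : Fin q → ℝ, nsqR v = 1 → rayR M v ≤ b) : lmaxR M ≤ b := by
  refine csSup_le (lmax_nonempty hq M) ?_
  rintro x ⟨v, hv, rfl⟩; exact h v hv

lemma lmaxR_add_le {q : ℕ} (hq : 0 < q) (M N : Matrix (Fin q) (Fin q) ℝ) :
    lmaxR (M + N) ≤ lmaxR M + lmaxR N := by
  refine lmaxR_le hq _ fun v hv => ?_
  rw [rayR_add]
  exact add_le_add (rayR_le_lmaxR M hv) (rayR_le_lmaxR N hv)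

lemma lmaxR_diagonal_le {q : ℕ} (hq : 0 < q) (δ : Fin q → ℝ) {b : ℝ}
    (h : ∀ k, δ k ≤ b) : lmaxR (Matrix.diagonal δ) ≤ b := by
  refine lmaxR_le hq _ fun v hv => ?_
  rw [rayR_diagonal]
  calc ∑ k, δ k * v k ^ 2 ≤ ∑ k, b * v k ^ 2 :=
        Finset.sum_le_sum fun k _ => mul_le_mul_of_nonneg_right (h k) (sq_nonneg _)
    _ = b := by rw [← Finset.mul_sum]; rw [show (∑ k, v k ^ 2) = nsqR v from rfl, hv, mul_one]

lemma lmaxR_diagonal_ge {q : ℕ} (δ : Fin q → ℝ) (k : Fin q) :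
    δ k ≤ lmaxR (Matrix.diagonal δ) := by
  have := rayR_le_lmaxR (Matrix.diagonal δ) (nsqR_single k)
  rw [rayR_diagonal] at this
  refine le_trans (le_of_eq ?_) this
  rw [Finset.sum_eq_single k]
  · simp
  · intro j _ hj; simp [Pi.single_apply, hj]
  · simp

/-! ### The diagonal structure -/

/-- entries of B·diag(c) -/
def aA {q : ℕ} (B : Matrix (Fin q) (Fin q) ℝ) (c : Fin q → ℝ) : Fin q → Fin q → ℝ :=
  fun k l => B k l * c l

/-- the diagonal correction vector d(w) -/
def dvec {q : ℕ} (B : Matrix (Fin q) (Fin q) ℝ) (c : Fin q → ℝ) (w : Fin q → ℝ) :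
    Fin q → ℝ := fun k => ∑ l, aA B c k l * (w l - 1)

/-- gf w k = 1/w_k + d(w)_k -/
def gf {q : ℕ} (B : Matrix (Fin q) (Fin q) ℝ) (c : Fin q → ℝ) (w : Fin q → ℝ) :
    Fin q → ℝ := fun k => (w k)⁻¹ + dvec B c w k

section Aux
variable {q : ℕ} (B : Matrix (Fin q) (Fin q) ℝ) (c : Fin q → ℝ)

lemma mulVec_eq_dvec (w : Fin q → ℝ) :
    (B * Matrix.diagonal c).mulVec (w - 1) = dvec B c w := by
  funext k
  simp [Matrix.mulVec, dotProduct, Matrix.mul_diagonal, dvec, aA]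

lemma diag_sum_eq (w : Fin q → ℝ) :
    Matrix.diagonal (fun k => (w k)⁻¹) +
      Matrix.diagonal ((B * Matrix.diagonal c).mulVec (w - 1)) =
    Matrix.diagonal (gf B c w) := by
  rw [mulVec_eq_dvec, Matrix.diagonal_add]
  rfl

lemma dvec_sub (w z : Fin q → ℝ) (k : Fin q) :
    dvec B c (w - z) k = dvec B c w k - ∑ l, aA B c k l * z l := by
  simp only [dvec, Pi.sub_apply]
  rw [← Finset.sum_sub_distrib]
  congr 1; funext l; ring

lemma dvec_smul_single (η : ℝ) (j : Fin q) (k : Fin q) :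
    ∑ l, aA B c k l * (η • (Pi.single j (1:ℝ) : Fin q → ℝ)) l = η * aA B c k j := by
  rw [Finset.sum_eq_single j]
  · simp [mul_comm]
  · intro l _ hl; simp [Pi.single_apply, hl]
  · simp

lemma gf_lb (hBpos : ∀ k l, 0 < B k l) (hc : ∀ k, 0 < c k) {w : Fin q → ℝ}
    (hw : ∀ k, 0 < w k) (k : Fin q) :
    -(∑ i, ∑ j, aA B c i j) ≤ gf B c w k := by
  have h1 : -(∑ j, aA B c k j) ≤ gf B c w k := by
    have h2 : ∀ l, -(aA B c k l) ≤ aA B c k l * (w l - 1) := by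
      intro l
      have ha : 0 < aA B c k l := mul_pos (hBpos k l) (hc l)
      have := mul_pos ha (hw l)
      nlinarith
    have h3 : ∑ l, -(aA B c k l) ≤ dvec B c w k := Finset.sum_le_sum fun l _ => h2 l
    have h4 : 0 < (w k)⁻¹ := inv_pos.mpr (hw k)
    simp only [gf]
    rw [Finset.sum_neg_distrib] at h3
    linarith
  have h5 : (∑ j, aA B c k j) ≤ ∑ i, ∑ j, aA B c i j := by
    refine Finset.single_le_sum (f := fun i => ∑ j, aA B c i j) (fun i _ => ?_) (Finset.mem_univ k)
    exact Finset.sum_nonneg fun j _ => (mul_pos (hBpos i j) (hc j)).le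
  linarith

/-- members of the `lamNull` infimum set -/
lemma fN_mem {w : Fin q → ℝ} (hw : ∀ k, 0 < w k) :
    lmaxR (Matrix.diagonal (gf B c w)) ∈
      {x | ∃ v : Fin q → ℝ, (∀ k, 0 < v k) ∧
        x = lmaxR (Matrix.diagonal (fun k => (v k)⁻¹) +
          Matrix.diagonal ((B * Matrix.diagonal c).mulVec (v - 1)))} :=
  ⟨w, hw, by rw [diag_sum_eq]⟩

lemma nullSet_bddBelow (hq : 0 < q) (hBpos : ∀ k l, 0 < B k l) (hc : ∀ k, 0 < c k) :
    BddBelow {x | ∃ v : Fin q → ℝ, (∀ k, 0 < v k) ∧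
      x = lmaxR (Matrix.diagonal (fun k => (v k)⁻¹) +
        Matrix.diagonal ((B * Matrix.diagonal c).mulVec (v - 1)))} := by
  refine ⟨-(∑ i, ∑ j, aA B c i j), ?_⟩
  rintro x ⟨w, hw, rfl⟩
  rw [diag_sum_eq]
  exact le_trans (gf_lb B c hBpos hc hw ⟨0, hq⟩) (lmaxR_diagonal_ge _ _)

lemma lamNull_le_fN (hq : 0 < q) (hBpos : ∀ k l, 0 < B k l) (hc : ∀ k, 0 < c k)
    {w : Fin q → ℝ} (hw : ∀ k, 0 < w k) :
    lamNull B c ≤ lmaxR (Matrix.diagonal (gf B c w)) :=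
  csInf_le (nullSet_bddBelow B c hq hBpos hc) (fN_mem B c hw)

lemma gf_le_fN (w : Fin q → ℝ) (k : Fin q) :
    gf B c w k ≤ lmaxR (Matrix.diagonal (gf B c w)) :=
  lmaxR_diagonal_ge _ k

/-- no strictly positive point can push all coordinates of `gf` strictly below `lamNull` -/
lemma no_better (hq : 0 < q) (hBpos : ∀ k l, 0 < B k l) (hc : ∀ k, 0 < c k)
    {w : Fin q → ℝ} (hw : ∀ k, 0 < w k)
    (hstrict : ∀ k, gf B c w k < lamNull B c) : False := by
  have hne : (Finset.univ : Finset (Fin q)).Nonempty := ⟨⟨0, hq⟩, Finset.mem_univ _⟩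
  have hb : lmaxR (Matrix.diagonal (gf B c w)) ≤
      Finset.univ.sup' hne (gf B c w) :=
    lmaxR_diagonal_le hq _ fun k => Finset.le_sup' _ (Finset.mem_univ k)
  have hlt : Finset.univ.sup' hne (gf B c w) < lamNull B c := by
    rw [Finset.sup'_lt_iff]
    exact fun k _ => hstrict k
  exact absurd (lamNull_le_fN B c hq hBpos hc hw) (by linarith)

end Aux

section Aux2
variable {q : ℕ} (B : Matrix (Fin q) (Fin q) ℝ) (c : Fin q → ℝ)

/-- at a minimizer of `lamNull`, all coordinates of `gf` are active -/
lemma gf_active (hq : 0 < q) (hBpos : ∀ k l, 0 < B k l) (hc : ∀ k, 0 < c k)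
    {v : Fin q → ℝ} (hv : ∀ k, 0 < v k)
    (hfv : lmaxR (Matrix.diagonal (gf B c v)) = lamNull B c) :
    ∀ j, gf B c v j = lamNull B c := by
  intro j
  refine le_antisymm (hfv ▸ gf_le_fN B c v j) ?_
  by_contra hlt
  push_neg at hlt
  set ρ : ℝ := lamNull B c - gf B c v j with hρdef
  have hρ : 0 < ρ := by simp only [hρdef]; linarith
  have hvj := hv j
  set η : ℝ := min (v j / 2) (ρ * (v j) ^ 2 / 4) with hηdef
  have hη : 0 < η := lt_min (by linarith) (by positivity)
  have hη1 : η ≤ v j / 2 := min_le_left _ _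
  have hη2 : η ≤ ρ * (v j) ^ 2 / 4 := min_le_right _ _
  set w : Fin q → ℝ := v - η • (Pi.single j (1:ℝ) : Fin q → ℝ) with hwdef
  have hwk : ∀ k, w k = v k - η * (Pi.single j (1:ℝ) : Fin q → ℝ) k := fun k => rfl
  have hw : ∀ k, 0 < w k := by
    intro k
    rw [hwk]
    rcases eq_or_ne k j with rfl | hkj
    · simp only [Pi.single_eq_same, mul_one]; linarith
    · simp [Pi.single_apply, hkj, hv k]
  have hdw : ∀ k, dvec B c w k = dvec B c v k - η * aA B c k j := by
    intro k
    rw [hwdef, dvec_sub, dvec_smul_single]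
  refine no_better B c hq hBpos hc hw fun k => ?_
  have haA : ∀ i l, 0 < aA B c i l := fun i l => mul_pos (hBpos i l) (hc l)
  have hgk : gf B c v k ≤ lamNull B c := hfv ▸ gf_le_fN B c v k
  rcases eq_or_ne k j with rfl | hkj
  · -- k = j
    have hwj : w k = v k - η := by rw [hwk]; simp
    have hpos : 0 < v k - η := by linarith
    have key : (v k - η)⁻¹ - (v k)⁻¹ = η / ((v k - η) * v k) := by
      field_simp
      ring
    have hbound : η / ((v k - η) * v k) ≤ ρ / 2 := by
      rw [div_le_iff₀ (by positivity)]
      nlinarith [mul_nonneg (mul_nonneg hρ.le hvj.le)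
        (by linarith : (0:ℝ) ≤ (v k - η) - v k / 2)]
    have heq1 : gf B c w k = (v k - η)⁻¹ + dvec B c v k - η * aA B c k k := by
      simp only [gf, hdw k, hwj]; ring
    have hgfv : gf B c v k = (v k)⁻¹ + dvec B c v k := rfl
    have haAk := haA k k
    rw [heq1]
    have hinv : (v k - η)⁻¹ ≤ (v k)⁻¹ + ρ / 2 := by linarith
    have hρval : lamNull B c = gf B c v k + ρ := by simp only [hρdef]; ring
    rw [hρval, hgfv]
    nlinarith [mul_pos hη haAk]
  · -- k ≠ j
    have hwkk : w k = v k := by rw [hwk]; simp [Pi.single_apply, hkj]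
    have heq2 : gf B c w k = gf B c v k - η * aA B c k j := by
      simp only [gf, hdw k, hwkk]; ring
    rw [heq2]
    nlinarith [mul_pos hη (haA k j)]

end Aux2

section Aux3
variable {q : ℕ} (B : Matrix (Fin q) (Fin q) ℝ) (c : Fin q → ℝ)

/-- at a minimizer with all coordinates active, there is no direction `h` in which all
gradients are strictly positive -/
lemma no_descent (hq : 0 < q) (hBpos : ∀ k l, 0 < B k l) (hc : ∀ k, 0 < c k)
    {v : Fin q → ℝ} (hv : ∀ k, 0 < v k)
    (hgv : ∀ k, gf B c v k = lamNull B c) :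
    ¬ ∃ h : Fin q → ℝ, ∀ k, h k < (v k) ^ 2 * ∑ l, aA B c k l * h l := by
  rintro ⟨h, hh⟩
  set S : Fin q → ℝ := fun k => ∑ l, aA B c k l * h l with hSdef
  set δ : Fin q → ℝ := fun k => S k - h k / (v k) ^ 2 with hδdef
  have hδpos : ∀ k, 0 < δ k := by
    intro k
    have hvk := hv k
    have : h k / (v k) ^ 2 < S k := by
      rw [div_lt_iff₀ (by positivity)]
      calc h k < (v k) ^ 2 * S k := hh k
        _ = S k * (v k) ^ 2 := by ring
    simp only [hδdef]; linarith
  have hne : (Finset.univ : Finset (Fin q)).Nonempty := ⟨⟨0, hq⟩, Finset.mem_univ _⟩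
  set η : ℝ := Finset.univ.inf' hne
      (fun k => min (v k / (2 * (|h k| + 1))) (δ k * (v k) ^ 3 / (4 * ((h k) ^ 2 + 1))))
    with hηdef
  have hη : 0 < η := by
    rw [hηdef, Finset.lt_inf'_iff]
    intro k _
    have := hv k
    have := hδpos k
    have := abs_nonneg (h k)
    exact lt_min (by positivity) (by positivity)
  have hη1 : ∀ k, η ≤ v k / (2 * (|h k| + 1)) := fun k =>
    le_trans (Finset.inf'_le _ (Finset.mem_univ k)) (min_le_left _ _)
  have hη2 : ∀ k, η ≤ δ k * (v k) ^ 3 / (4 * ((h k) ^ 2 + 1)) := fun k =>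
    le_trans (Finset.inf'_le _ (Finset.mem_univ k)) (min_le_right _ _)
  set w : Fin q → ℝ := v - η • h with hwdef
  have hwk : ∀ k, w k = v k - η * h k := fun k => rfl
  have hwhalf : ∀ k, v k / 2 ≤ w k := by
    intro k
    have h1 : η * (|h k| + 1) ≤ v k / 2 := by
      have h2 := hη1 k
      have h3 : 0 < |h k| + 1 := by positivity
      rw [le_div_iff₀ (by positivity)] at h2
      nlinarith
    have h4 : η * h k ≤ η * |h k| := mul_le_mul_of_nonneg_left (le_abs_self _) hη.le
    have : η * |h k| ≤ η * (|h k| + 1) := by nlinarith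
    rw [hwk]; linarith
  have hw : ∀ k, 0 < w k := fun k => lt_of_lt_of_le (by linarith [hv k]) (hwhalf k)
  have hdw : ∀ k, dvec B c w k = dvec B c v k - η * S k := by
    intro k
    rw [hwdef, dvec_sub]
    congr 1
    rw [hSdef, Finset.mul_sum]
    congr 1; funext l
    simp [Pi.smul_apply, smul_eq_mul]; ring
  refine no_better B c hq hBpos hc hw fun k => ?_
  have hvk := hv k
  have hwkpos := hw k
  have hwh := hwhalf k
  clear_value S δ η w
  -- key identity
  have key : (w k)⁻¹ - (v k)⁻¹ = η * h k / (w k * v k) := by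
    have : v k - w k = η * h k := by rw [hwk]; ring
    field_simp
    linarith
  have e2 : h k / (w k * v k) = h k / (v k) ^ 2 + η * (h k) ^ 2 / (w k * (v k) ^ 2) := by
    have hvw : v k - w k = η * h k := by rw [hwk]; ring
    field_simp
    linear_combination h k * hvw
  have e3 : η * (h k) ^ 2 / (w k * (v k) ^ 2) ≤ η * (h k) ^ 2 / ((v k) ^ 3 / 2) := by
    apply div_le_div_of_nonneg_left (by positivity) (by positivity)
    nlinarith
  have e4 : η * (h k) ^ 2 / ((v k) ^ 3 / 2) < δ k := by
    rw [div_lt_iff₀ (by positivity)]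
    have h5 := hη2 k
    rw [le_div_iff₀ (by positivity)] at h5
    have h7 : η * (4 * (h k ^ 2 + 1)) = 4 * (η * h k ^ 2) + 4 * η := by ring
    rw [h7] at h5
    have h8 : δ k * (v k ^ 3 / 2) = (δ k * v k ^ 3) / 2 := by ring
    rw [h8]
    have h9 : 0 ≤ η * h k ^ 2 := mul_nonneg hη.le (sq_nonneg _)
    linarith
  have e5 : h k / (w k * v k) < S k := by
    have : h k / (v k) ^ 2 + δ k = S k := by simp only [hδdef]; ring
    linarith
  have e6 : η * h k / (w k * v k) < η * S k := by
    have : η * h k / (w k * v k) = η * (h k / (w k * v k)) := by ring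
    rw [this]
    exact mul_lt_mul_of_pos_left e5 hη
  have e7 : gf B c w k = (w k)⁻¹ + dvec B c v k - η * S k := by
    simp only [gf, hdw k]; ring
  have e8 : gf B c v k = (v k)⁻¹ + dvec B c v k := rfl
  rw [e7, ← hgv k, e8]
  linarith

end Aux3

section Aux4
variable {q : ℕ}

lemma repr_single (x : Fin q → ℝ) :
    x = ∑ i, x i • (Pi.single i (1:ℝ) : Fin q → ℝ) := by
  funext j
  rw [Finset.sum_apply]
  rw [Finset.sum_eq_single j]
  · simp
  · intro i _ hij; simp [Pi.single_apply, Ne.symm hij]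
  · simp

variable (B : Matrix (Fin q) (Fin q) ℝ) (c : Fin q → ℝ)

/-- existence of a positive left eigenvector with eigenvalue 1 for the matrix
`(v k)² aA k l`, from the absence of strict descent directions. -/
lemma exists_perron (hq : 0 < q) (hBpos : ∀ k l, 0 < B k l) (hc : ∀ k, 0 < c k)
    {v : Fin q → ℝ} (hv : ∀ k, 0 < v k)
    (hnd : ¬ ∃ h : Fin q → ℝ, ∀ k, h k < (v k) ^ 2 * ∑ l, aA B c k l * h l) :
    ∃ s : Fin q → ℝ, (∀ k, 0 < s k) ∧
      ∀ j, ∑ k, s k * ((v k) ^ 2 * aA B c k j) = s j := by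
  set M : Matrix (Fin q) (Fin q) ℝ := Matrix.of (fun k l => (v k) ^ 2 * aA B c k l) with hM
  set L : (Fin q → ℝ) →ₗ[ℝ] (Fin q → ℝ) := M.mulVecLin - LinearMap.id with hLdef
  have hL : ∀ (h : Fin q → ℝ) k, L h k = (v k) ^ 2 * (∑ l, aA B c k l * h l) - h k := by
    intro h k
    simp only [hLdef, LinearMap.sub_apply, LinearMap.id_apply, Pi.sub_apply,
      Matrix.mulVecLin_apply]
    congr 1
    simp only [Matrix.mulVec, dotProduct, hM, Matrix.of_apply]
    rw [Finset.mul_sum]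
    congr 1; funext l; ring
  set P : Set (Fin q → ℝ) := {x | ∀ k, 0 < x k} with hPdef
  have hP_eq : P = Set.univ.pi (fun _ : Fin q => Set.Ioi (0:ℝ)) := by
    ext x; simp [hPdef, Set.mem_pi]
  have hPopen : IsOpen P := by
    rw [hP_eq]; exact isOpen_set_pi Set.finite_univ (fun i _ => isOpen_Ioi)
  have hPconv : Convex ℝ P := by
    rw [hP_eq]; exact convex_pi fun i _ => convex_Ioi 0
  have hVconv : Convex ℝ (LinearMap.range L : Set (Fin q → ℝ)) :=
    (LinearMap.range L).convex
  have hdisj : Disjoint P (LinearMap.range L : Set (Fin q → ℝ)) := by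
    rw [Set.disjoint_left]
    rintro x hxP ⟨h, rfl⟩
    refine hnd ⟨h, fun k => ?_⟩
    have := hxP k
    rw [hL h k] at this
    linarith
  obtain ⟨f, u, hfP, hfV⟩ := geometric_hahn_banach_open hPconv hPopen hVconv hdisj
  have hu0 : u ≤ 0 := by
    have := hfV 0 (Submodule.zero_mem _)
    simpa using this
  have hfV0 : ∀ x ∈ LinearMap.range L, f x = 0 := by
    intro x hx
    by_contra hne0
    have hmem : ((u - 1) / f x) • x ∈ (LinearMap.range L : Set (Fin q → ℝ)) :=
      Submodule.smul_mem _ _ hx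
    have := hfV _ hmem
    rw [f.map_smul, smul_eq_mul, div_mul_cancel₀ _ hne0] at this
    linarith
  set s : Fin q → ℝ := fun k => -f (Pi.single k 1) with hsdef
  have hs0 : ∀ k, 0 ≤ s k := by
    intro k
    by_contra hneg
    push_neg at hneg
    have hfs : 0 < f (Pi.single k 1) := by
      simp only [hsdef] at hneg
      linarith
    set ε : ℝ := f (Pi.single k 1) / (2 * (|f 1| + 1)) with hε
    have hε0 : 0 < ε := by positivity
    have hmem : (Pi.single k 1 + ε • (1 : Fin q → ℝ)) ∈ P := by
      intro i
      have h1 : (0:ℝ) ≤ (Pi.single k (1:ℝ) : Fin q → ℝ) i := by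
        rcases eq_or_ne i k with rfl | hik
        · simp
        · simp [Pi.single_apply, hik]
      have h2 : ((Pi.single k 1 + ε • (1 : Fin q → ℝ)) : Fin q → ℝ) i =
          (Pi.single k (1:ℝ) : Fin q → ℝ) i + ε := by
        simp
      rw [h2]; linarith
    have hlt := hfP _ hmem
    rw [map_add, f.map_smul, smul_eq_mul] at hlt
    have habs1 : -(ε * |f 1|) ≤ ε * f 1 := by
      have := neg_abs_le (f 1)
      nlinarith
    have habs2 : ε * (|f 1| + 1) = f (Pi.single k 1) / 2 := by
      rw [hε]; field_simp
    have habs3 : ε * |f 1| ≤ f (Pi.single k 1) / 2 := by nlinarith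
    linarith
  have hone : (1 : Fin q → ℝ) ∈ P := fun k => one_pos
  have hf1 : f 1 < 0 := lt_of_lt_of_le (hfP _ hone) hu0
  have hsumsingle : (1 : Fin q → ℝ) = ∑ k, Pi.single k (1:ℝ) := by
    funext j
    rw [Finset.sum_apply, Finset.sum_eq_single j]
    · simp
    · intro i _ hij; simp [Pi.single_apply, Ne.symm hij]
    · simp
  have hsum : 0 < ∑ k, s k := by
    have h2 : f 1 = ∑ k, f (Pi.single k 1) := by
      conv_lhs => rw [hsumsingle]
      rw [map_sum]
    have h3 : ∑ k, s k = -f 1 := by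
      simp only [hsdef, h2, Finset.sum_neg_distrib]
    rw [h3]; linarith
  have hrep : ∀ x : Fin q → ℝ, f x = ∑ k, x k * f (Pi.single k 1) := by
    intro x
    conv_lhs => rw [repr_single x]
    rw [map_sum]
    congr 1; funext k
    rw [f.map_smul, smul_eq_mul]
  have horto : ∀ j, ∑ k, s k * ((v k) ^ 2 * aA B c k j) = s j := by
    intro j
    have h0 : f (L (Pi.single j 1)) = 0 := hfV0 _ ⟨_, rfl⟩
    rw [hrep] at h0
    have hLk : ∀ k, L (Pi.single j 1) k =
        (v k) ^ 2 * aA B c k j - (Pi.single j (1:ℝ) : Fin q → ℝ) k := by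
      intro k
      rw [hL]
      congr 2
      rw [Finset.sum_eq_single j]
      · simp
      · intro l _ hl; simp [Pi.single_apply, hl]
      · simp
    have h1 : ∑ k, ((v k) ^ 2 * aA B c k j - (Pi.single j (1:ℝ) : Fin q → ℝ) k) *
        f (Pi.single k 1) = 0 := by
      rw [← h0]
      congr 1; funext k
      rw [hLk k]
    have h2 : ∑ k, ((v k) ^ 2 * aA B c k j) * f (Pi.single k 1) -
        ∑ k, (Pi.single j (1:ℝ) : Fin q → ℝ) k * f (Pi.single k 1) = 0 := by
      rw [← Finset.sum_sub_distrib]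
      rw [← h1]
      congr 1; funext k; ring
    have h3 : ∑ k, (Pi.single j (1:ℝ) : Fin q → ℝ) k * f (Pi.single k 1) =
        f (Pi.single j 1) := by
      rw [Finset.sum_eq_single j]
      · simp
      · intro l _ hl; simp [Pi.single_apply, hl]
      · simp
    have h4 : ∑ k, s k * ((v k) ^ 2 * aA B c k j) =
        -∑ k, ((v k) ^ 2 * aA B c k j) * f (Pi.single k 1) := by
      rw [← Finset.sum_neg_distrib]
      congr 1; funext k
      simp only [hsdef]; ring
    rw [h4]
    simp only [hsdef]
    rw [h3] at h2
    linarith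
  have hk0 : ∃ k0, 0 < s k0 := by
    by_contra hall
    push_neg at hall
    have : ∑ k, s k ≤ 0 := Finset.sum_nonpos fun k _ => hall k
    linarith
  obtain ⟨k0, hk0⟩ := hk0
  refine ⟨s, fun j => ?_, horto⟩
  rw [← horto j]
  refine Finset.sum_pos' (fun k _ => mul_nonneg (hs0 k) ?_) ⟨k0, Finset.mem_univ _, ?_⟩
  · exact mul_nonneg (by positivity) (mul_pos (hBpos k j) (hc j)).le
  · exact mul_pos hk0 (mul_pos (pow_pos (hv k0) 2) (mul_pos (hBpos k0 j) (hc j)))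

end Aux4

section Aux5
variable {q : ℕ} (B : Matrix (Fin q) (Fin q) ℝ) (c : Fin q → ℝ)

lemma dvec_diff (w z : Fin q → ℝ) (k : Fin q) :
    dvec B c w k - dvec B c z k = ∑ l, aA B c k l * (w l - z l) := by
  simp only [dvec]
  rw [← Finset.sum_sub_distrib]
  congr 1; funext l; ring

lemma weight_dvec_diff (t w z : Fin q → ℝ) :
    ∑ k, t k * (dvec B c w k - dvec B c z k) =
      ∑ l, (∑ k, t k * aA B c k l) * (w l - z l) := by
  have h1 : ∀ k, t k * (dvec B c w k - dvec B c z k) =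
      ∑ l, (t k * aA B c k l) * (w l - z l) := by
    intro k
    rw [dvec_diff, Finset.mul_sum]
    congr 1; funext l; ring
  rw [Finset.sum_congr rfl (fun k _ => h1 k), Finset.sum_comm]
  congr 1; funext l
  rw [Finset.sum_mul]

/-- quantitative growth of the objective away from the minimizer, using the
positive left eigenvector -/
lemma key_growth {v s : Fin q → ℝ} (hgv : ∀ k, gf B c v k = lamNull B c)
    (hv : ∀ k, 0 < v k) (hs : ∀ k, 0 < s k)
    (heig : ∀ j, ∑ k, s k * ((v k) ^ 2 * aA B c k j) = s j)
    {w : Fin q → ℝ} (hw : ∀ k, 0 < w k) :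
    (∑ k, s k * (v k) ^ 2) * lamNull B c + ∑ l, s l * ((w l - v l) ^ 2 / w l) ≤
      (∑ k, s k * (v k) ^ 2) * lmaxR (Matrix.diagonal (gf B c w)) := by
  have hstep1 : ∑ k, (s k * (v k) ^ 2) * gf B c w k ≤
      (∑ k, s k * (v k) ^ 2) * lmaxR (Matrix.diagonal (gf B c w)) := by
    rw [Finset.sum_mul]
    refine Finset.sum_le_sum fun k _ => ?_
    exact mul_le_mul_of_nonneg_left (gf_le_fN B c w k)
      (mul_nonneg (hs k).le (sq_nonneg _))
  have hsplit : ∑ k, (s k * (v k) ^ 2) * gf B c w k =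
      ∑ k, (s k * (v k) ^ 2) * gf B c v k
      + (∑ k, (s k * (v k) ^ 2) * ((w k)⁻¹ - (v k)⁻¹)
        + ∑ k, (s k * (v k) ^ 2) * (dvec B c w k - dvec B c v k)) := by
    rw [← Finset.sum_add_distrib, ← Finset.sum_add_distrib]
    congr 1; funext k
    simp only [gf]; ring
  have he2 : ∑ k, (s k * (v k) ^ 2) * (dvec B c w k - dvec B c v k) =
      ∑ l, s l * (w l - v l) := by
    rw [weight_dvec_diff]
    congr 1; funext l
    congr 1
    rw [← heig l]
    congr 1; funext k; ring
  have hmerge : ∑ k, (s k * (v k) ^ 2) * ((w k)⁻¹ - (v k)⁻¹) + ∑ l, s l * (w l - v l)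
      = ∑ l, s l * ((w l - v l) ^ 2 / w l) := by
    rw [← Finset.sum_add_distrib]
    congr 1; funext l
    have hwl := hw l
    have hvl := hv l
    field_simp
    ring
  have hvcase : ∑ k, (s k * (v k) ^ 2) * gf B c v k =
      (∑ k, s k * (v k) ^ 2) * lamNull B c := by
    rw [Finset.sum_mul]
    congr 1; funext k
    rw [hgv k]
  rw [hsplit, he2, hmerge, hvcase] at hstep1
  linarith

end Aux5

set_option maxHeartbeats 1000000 in
/-- Lemma: characterization of the phase region λ = λ_∅ in terms of the
minimizer v*_∅ of the variational problem defining λ_∅. -/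
theorem phase_region_characterization {q : ℕ} (hq : 0 < q)
    (B : Matrix (Fin q) (Fin q) ℝ) (hBsym : B.IsSymm) (hBpos : ∀ k l, 0 < B k l)
    (c : Fin q → ℝ) (hc : ∀ k, 0 < c k)
    (v : Fin q → ℝ) (hv : ∀ k, 0 < v k)
    (hmin : lmaxR (Matrix.diagonal (fun k => (v k)⁻¹) +
      Matrix.diagonal ((B * Matrix.diagonal c).mulVec (v - 1))) = lamNull B c) :
    lamVal B c = lamNull B c ↔
      lmaxR (Matrix.diagonal (fun k => Real.sqrt (c k)) * B *
          Matrix.diagonal (fun k => Real.sqrt (c k)) -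
        Matrix.diagonal (fun k => (v k)⁻¹)) ≤ 0 := by
  have hne : (Finset.univ : Finset (Fin q)).Nonempty := ⟨⟨0, hq⟩, Finset.mem_univ _⟩
  set S : Matrix (Fin q) (Fin q) ℝ :=
    Matrix.diagonal (fun k => Real.sqrt (c k)) * B *
      Matrix.diagonal (fun k => Real.sqrt (c k)) with hSdef
  have hfv : lmaxR (Matrix.diagonal (gf B c v)) = lamNull B c := by
    rw [← diag_sum_eq]; exact hmin
  have hgv : ∀ j, gf B c v j = lamNull B c := gf_active B c hq hBpos hc hv hfv
  -- rewrite lamVal as an infimum over the "nice" set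
  have hlamVal_eq : lamVal B c = sInf {x | ∃ w : Fin q → ℝ, (∀ k, 0 < w k) ∧
      x = max (lmaxR (S + Matrix.diagonal (dvec B c w)))
        (lmaxR (Matrix.diagonal (gf B c w)))} := by
    unfold lamVal
    congr 1
    ext x
    constructor
    · rintro ⟨w, hw, rfl⟩
      exact ⟨w, hw, by rw [diag_sum_eq, mulVec_eq_dvec]⟩
    · rintro ⟨w, hw, rfl⟩
      exact ⟨w, hw, by rw [diag_sum_eq, mulVec_eq_dvec]⟩
  set NVS : Set ℝ := {x | ∃ w : Fin q → ℝ, (∀ k, 0 < w k) ∧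
      x = max (lmaxR (S + Matrix.diagonal (dvec B c w)))
        (lmaxR (Matrix.diagonal (gf B c w)))} with hNVS
  have hVne : NVS.Nonempty := ⟨_, v, hv, rfl⟩
  have hVbdd : BddBelow NVS := by
    refine ⟨-(∑ i, ∑ j, aA B c i j), ?_⟩
    rintro x ⟨w, hw, rfl⟩
    exact le_trans (le_trans (gf_lb B c hBpos hc hw ⟨0, hq⟩) (lmaxR_diagonal_ge _ _))
      (le_max_right _ _)
  have hle0 : lamNull B c ≤ lamVal B c := by
    rw [hlamVal_eq]
    refine le_csInf hVne ?_
    rintro x ⟨w, hw, rfl⟩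
    exact le_trans (lamNull_le_fN B c hq hBpos hc hw) (le_max_right _ _)
  constructor
  · -- forward direction, by contraposition
    intro heq
    by_contra hpos
    push_neg at hpos
    set ε : ℝ := lmaxR (S - Matrix.diagonal fun k => (v k)⁻¹) with hε
    -- a unit vector with large Rayleigh quotient
    obtain ⟨x, ⟨u, hu, rfl⟩, hxgt⟩ :=
      exists_lt_of_lt_csSup (lmax_nonempty hq (S - Matrix.diagonal fun k => (v k)⁻¹))
        (show ε / 2 < lmaxR (S - Matrix.diagonal fun k => (v k)⁻¹) by rw [← hε]; linarith)
    have hray : ε / 2 < rayR S u - ∑ k, (v k)⁻¹ * u k ^ 2 := by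
      rwa [rayR_sub, rayR_diagonal] at hxgt
    have hnd := no_descent B c hq hBpos hc hv hgv
    obtain ⟨s, hs, heig⟩ := exists_perron B c hq hBpos hc hv hnd
    set γ : Fin q → ℝ := fun l => ∑ k, u k ^ 2 * aA B c k l with hγ
    have hγpos : ∀ l, 0 < γ l := by
      intro l
      have hex : ∃ k, u k ≠ 0 := by
        by_contra hall
        push_neg at hall
        have h0 : nsqR u = 0 := by
          simp only [nsqR]
          exact Finset.sum_eq_zero fun k _ => by rw [hall k]; ring
        rw [hu] at h0; norm_num at h0
      obtain ⟨k1, hk1⟩ := hex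
      refine Finset.sum_pos'
        (fun k _ => mul_nonneg (sq_nonneg _) (mul_pos (hBpos k l) (hc l)).le)
        ⟨k1, Finset.mem_univ _, mul_pos (by positivity) (mul_pos (hBpos k1 l) (hc l))⟩
    set T : ℝ := ∑ k, s k * (v k) ^ 2 with hT
    have hT0 : 0 < T :=
      Finset.sum_pos (fun k _ => mul_pos (hs k) (pow_pos (hv k) 2)) hne
    have hεpos : 0 < ε := hpos
    have hq0 : (0:ℝ) < q := by exact_mod_cast hq
    set m : Fin q → ℝ := fun j => s j * (ε / (4 * q) / γ j) ^ 2 / (v j * T) with hm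
    have hmpos : ∀ j, 0 < m j := by
      intro j
      simp only [hm]
      exact div_pos (mul_pos (hs j)
        (pow_pos (div_pos (div_pos hεpos (by linarith)) (hγpos j)) 2))
        (mul_pos (hv j) hT0)
    set δ2 : ℝ := Finset.univ.inf' hne m with hδ2
    have hδ2pos : 0 < δ2 := by
      rw [hδ2, Finset.lt_inf'_iff]
      exact fun j _ => hmpos j
    set δ : ℝ := min (ε / 4) δ2 with hδ
    have hδpos : 0 < δ := lt_min (by linarith) hδ2pos
    have hδle1 : δ ≤ ε / 4 := min_le_left _ _
    have hδle2 : δ ≤ δ2 := min_le_right _ _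
    have hδ2le : ∀ j, δ2 ≤ m j := fun j => hδ2 ▸ Finset.inf'_le _ (Finset.mem_univ j)
    clear_value ε γ T m δ2 δ
    have hclaim : lamNull B c + δ ≤ lamVal B c := by
      rw [hlamVal_eq]
      refine le_csInf hVne ?_
      rintro x ⟨w, hw, rfl⟩
      set G : ℝ := ∑ l, γ l * (w l - v l) with hG
      clear_value G
      rcases le_or_gt (-(ε/4)) G with hcase | hcase
      · -- use the first block
        have h1 : rayR (S + Matrix.diagonal (dvec B c w)) u ≤
            lmaxR (S + Matrix.diagonal (dvec B c w)) := rayR_le_lmaxR _ hu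
        have h2 : rayR (S + Matrix.diagonal (dvec B c w)) u =
            rayR S u + ∑ k, dvec B c w k * u k ^ 2 := by
          rw [rayR_add, rayR_diagonal]
        have h3 : ∑ k, (v k)⁻¹ * u k ^ 2 + ∑ k, dvec B c w k * u k ^ 2 =
            lamNull B c + G := by
          have e1 : ∑ k, (v k)⁻¹ * u k ^ 2 + ∑ k, dvec B c w k * u k ^ 2 =
              ∑ k, gf B c v k * u k ^ 2
              + ∑ k, (u k ^ 2) * (dvec B c w k - dvec B c v k) := by
            rw [← Finset.sum_add_distrib, ← Finset.sum_add_distrib]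
            congr 1; funext k
            simp only [gf]; ring
          have e2 : ∑ k, gf B c v k * u k ^ 2 = lamNull B c := by
            have : ∑ k, gf B c v k * u k ^ 2 = ∑ k, lamNull B c * u k ^ 2 := by
              congr 1; funext k; rw [hgv k]
            rw [this, ← Finset.mul_sum,
              show (∑ k, u k ^ 2) = nsqR u from rfl, hu, mul_one]
          have e3 : ∑ k, (u k ^ 2) * (dvec B c w k - dvec B c v k) = G := by
            rw [weight_dvec_diff, hG, hγ]
          rw [e1, e2, e3]
        have hAfinal : lamNull B c + δ ≤ lmaxR (S + Matrix.diagonal (dvec B c w)) := by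
          rw [h2] at h1
          linarith
        exact le_trans hAfinal (le_max_left _ _)
      · -- second block: use quantitative growth
        have hGneg : ε / 4 < ∑ l, γ l * (v l - w l) := by
          have : ∑ l, γ l * (v l - w l) = -G := by
            rw [hG, ← Finset.sum_neg_distrib]
            congr 1; funext l; ring
          rw [this]; linarith
        have hex : ∃ j, ε / (4 * q) < γ j * (v j - w j) := by
          by_contra hall
          push_neg at hall
          have hsumle : ∑ l, γ l * (v l - w l) ≤ ∑ _l : Fin q, ε / (4 * q) :=
            Finset.sum_le_sum fun l _ => hall l
          rw [Finset.sum_const, Finset.card_univ, Fintype.card_fin, nsmul_eq_mul] at hsumle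
          have : (q:ℝ) * (ε / (4 * q)) = ε / 4 := by field_simp
          rw [this] at hsumle
          linarith
        obtain ⟨j, hj⟩ := hex
        have hγj := hγpos j
        set r : ℝ := ε / (4 * q) / γ j with hr
        have hr0 : 0 < r := by
          rw [hr]
          exact div_pos (div_pos hεpos (by linarith)) hγj
        have hjw : r < v j - w j := by
          rw [hr, div_lt_iff₀ hγj]
          calc ε / (4 * q) < γ j * (v j - w j) := hj
            _ = (v j - w j) * γ j := by ring
        have hgrow := key_growth B c hgv hv hs heig hw
        rw [← hT] at hgrow
        have hterm : s j * ((w j - v j) ^ 2 / w j) ≤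
            ∑ l, s l * ((w l - v l) ^ 2 / w l) := by
          refine Finset.single_le_sum (f := fun l => s l * ((w l - v l) ^ 2 / w l))
            (fun l _ => mul_nonneg (hs l).le (div_nonneg (sq_nonneg _) (hw l).le))
            (Finset.mem_univ j)
        have hwj := hw j
        have hvj := hv j
        have hsj := hs j
        have hwjlt : w j < v j := by linarith
        have hterm2 : s j * (r ^ 2 / v j) ≤ s j * ((w j - v j) ^ 2 / w j) := by
          have h4 : r ^ 2 < (w j - v j) ^ 2 := by nlinarith
          have h5 : r ^ 2 / v j ≤ (w j - v j) ^ 2 / w j := by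
            rw [div_le_div_iff₀ hvj hwj]
            nlinarith
          exact mul_le_mul_of_nonneg_left h5 hsj.le
        -- conclude fN w ≥ lamNull + m j
        have hmj : T * (lamNull B c + m j) ≤ T * lmaxR (Matrix.diagonal (gf B c w)) := by
          have hTm : T * m j = s j * (r ^ 2 / v j) := by
            simp only [hm, hr]
            field_simp
          calc T * (lamNull B c + m j) = T * lamNull B c + T * m j := by ring
            _ = T * lamNull B c + s j * (r ^ 2 / v j) := by rw [hTm]
            _ ≤ T * lamNull B c + s j * ((w j - v j) ^ 2 / w j) := by linarith
            _ ≤ T * lamNull B c + ∑ l, s l * ((w l - v l) ^ 2 / w l) := by linarith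
            _ ≤ T * lmaxR (Matrix.diagonal (gf B c w)) := hgrow
        have hfNw : lamNull B c + m j ≤ lmaxR (Matrix.diagonal (gf B c w)) :=
          le_of_mul_le_mul_left hmj hT0
        have hδle : δ ≤ m j := le_trans hδle2 (hδ2le j)
        exact le_trans (by linarith) (le_max_right
          (lmaxR (S + Matrix.diagonal (dvec B c w))) (lmaxR (Matrix.diagonal (gf B c w))))
    rw [heq] at hclaim
    linarith
  · -- reverse direction
    intro hle
    refine le_antisymm ?_ hle0
    have hmin' : lmaxR (Matrix.diagonal (fun k => (v k)⁻¹) +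
        Matrix.diagonal (dvec B c v)) = lamNull B c := by
      rw [← mulVec_eq_dvec B c v]; exact hmin
    have hA : lmaxR (S + Matrix.diagonal (dvec B c v)) ≤ lamNull B c := by
      have hdecomp : S + Matrix.diagonal (dvec B c v) =
          (S - Matrix.diagonal (fun k => (v k)⁻¹)) +
          (Matrix.diagonal (fun k => (v k)⁻¹) + Matrix.diagonal (dvec B c v)) := by
        abel
      calc lmaxR (S + Matrix.diagonal (dvec B c v))
          = lmaxR ((S - Matrix.diagonal (fun k => (v k)⁻¹)) +
            (Matrix.diagonal (fun k => (v k)⁻¹) + Matrix.diagonal (dvec B c v))) := by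
            rw [← hdecomp]
        _ ≤ lmaxR (S - Matrix.diagonal (fun k => (v k)⁻¹)) +
            lmaxR (Matrix.diagonal (fun k => (v k)⁻¹) + Matrix.diagonal (dvec B c v)) :=
            lmaxR_add_le hq _ _
        _ ≤ 0 + lamNull B c := add_le_add hle (le_of_eq hmin')
        _ = lamNull B c := zero_add _
    have hmax : max (lmaxR (S + Matrix.diagonal (dvec B c v)))
        (lmaxR (Matrix.diagonal (gf B c v))) = lamNull B c := by
      rw [hfv]
      exact max_eq_right hA
    rw [hlamVal_eq]
    exact csInf_le hVbdd ⟨v, hv, hmax.symm⟩
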